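/- Let V₁, V₂, W be finite-dimensional complex Hilbert spaces, let |ψ₀⟩, |ψ₁⟩ ∈ V₁, |φ₀⟩, |φ₁⟩ ∈ V₂ and |Φ⟩ ∈ W be arbitrary vectors, and let α, β, γ, δ ∈ ℂ satisfy |α|²+|β|² = |γ|²+|δ|² = 1. Consider the state |Ψ_init⟩ = (α|ψ₀⟩|0⟩_A + β|ψ₁⟩|1⟩_A) ⊗ (γ|φ₀⟩|0⟩_B + δ|φ₁⟩|1⟩_B) ⊗ |Ψ⁺⟩_{CD} ⊗ |Φ⟩, where A, B, C, D are qubit registers. Then for each measurement outcome a ∈ {0,1}, applying CNOT^{(A,C)}, then CNOT^{(B,C)}, then projecting register C onto |a⟩ and applying σ_X^a to register D, yields the vector (1/√2)·[(αγ|ψ₀⟩|φ₀⟩|00⟩_{AB} + βδ|ψ₁⟩|φ₁⟩|11⟩_{AB})|0⟩_D + (αδ|ψ₀⟩|φ₁⟩|01⟩_{AB} + βγ|ψ₁⟩|φ₀⟩|10⟩_{AB})|1⟩_D] ⊗ |Φ⟩. (This is the action of the Connection:Add operation Add^{A,B}_{C→D}.) -/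

import Mathlib

open scoped TensorProduct

namespace QNC

noncomputable section

/-- The state space of `n` qubit registers: amplitudes on the computational basis. -/
abbrev QState (n : ℕ) : Type := (Fin n → Bool) → ℂ

/-- Computational basis state `|x⟩`. -/
def ket {n : ℕ} (x : Fin n → Bool) : QState n := fun y => if y = x then 1 else 0

/-- The CNOT gate with control register `c` and target register `t`. -/
def CNOTgate {n : ℕ} (c t : Fin n) : QState n →ₗ[ℂ] QState n where
  toFun ψ := fun x => ψ (Function.update x t (xor (x c) (x t)))
  map_add' _ _ := rfl
  map_smul' _ _ := rfl

/-- The Pauli `σ_X` gate on register `i`. -/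
def Xgate {n : ℕ} (i : Fin n) : QState n →ₗ[ℂ] QState n where
  toFun ψ := fun x => ψ (Function.update x i (!(x i)))
  map_add' _ _ := rfl
  map_smul' _ _ := rfl

/-- The Pauli `σ_Z` gate on register `i`. -/
def Zgate {n : ℕ} (i : Fin n) : QState n →ₗ[ℂ] QState n where
  toFun ψ := fun x => if x i then -ψ x else ψ x
  map_add' ψ φ := by funext x; by_cases h : x i <;> simp [h, neg_add] <;> ring
  map_smul' c ψ := by funext x; by_cases h : x i <;> simp [h]

/-- The Hadamard gate on register `i`. -/
def Hgate {n : ℕ} (i : Fin n) : QState n →ₗ[ℂ] QState n where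
  toFun ψ := fun x => (Real.sqrt 2 : ℂ)⁻¹ *
      (ψ (Function.update x i false) + (if x i then -1 else 1) * ψ (Function.update x i true))
  map_add' ψ φ := by funext x; simp only [Pi.add_apply]; ring
  map_smul' c ψ := by
    funext x; simp only [Pi.smul_apply, smul_eq_mul, RingHom.id_apply]; ring

/-- The computational-basis measurement map `|a⟩⟨a|_i ⊗ I` for outcome `a` on register `i`
(the measured register is kept, left in the basis state `|a⟩`, and can be disregarded). -/
def proj {n : ℕ} (i : Fin n) (a : Bool) : QState n →ₗ[ℂ] QState n where
  toFun ψ := fun x => if x i = a then ψ x else 0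
  map_add' ψ φ := by funext x; by_cases h : x i = a <;> simp [h]
  map_smul' c ψ := by funext x; by_cases h : x i = a <;> simp [h]

/-- `σ_X^a` on register `i`. -/
def Xpow {n : ℕ} (a : Bool) (i : Fin n) : QState n →ₗ[ℂ] QState n :=
  if a then Xgate i else LinearMap.id

/-- `σ_Z^a` on register `i`. -/
def Zpow {n : ℕ} (a : Bool) (i : Fin n) : QState n →ₗ[ℂ] QState n :=
  if a then Zgate i else LinearMap.id

/-- The Connection operation `Con^c_{r→t}` with measurement outcome `a`:
apply `CNOT^{(c,r)}`, project register `r` onto `|a⟩`, apply `σ_X^a` to register `t`. -/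
def Con {n : ℕ} (c r t : Fin n) (a : Bool) : QState n →ₗ[ℂ] QState n :=
  Xpow a t ∘ₗ proj r a ∘ₗ CNOTgate c r

/-- The Connection:Add operation `Add^{c₁,c₂}_{r→t}` with measurement outcome `a`:
apply `CNOT^{(c₁,r)}`, then `CNOT^{(c₂,r)}`, project `r` onto `|a⟩`, apply `σ_X^a` to `t`. -/
def AddOp {n : ℕ} (c₁ c₂ r t : Fin n) (a : Bool) : QState n →ₗ[ℂ] QState n :=
  Con c₂ r t a ∘ₗ CNOTgate c₁ r

/-- The Connection:Fanout operation `Fanout^c_{r₁→t₁, r₂→t₂}` with outcomes `a₁, a₂`. -/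
def Fanout {n : ℕ} (c r₁ t₁ r₂ t₂ : Fin n) (a₁ a₂ : Bool) : QState n →ₗ[ℂ] QState n :=
  Con c r₂ t₂ a₂ ∘ₗ Con c r₁ t₁ a₁

/-- The Removal operation `Rem_{r→t}` with measurement outcome `a`:
apply `H` to `r`, project `r` onto `|a⟩`, apply `σ_Z^a` to `t`. -/
def Rem {n : ℕ} (r t : Fin n) (a : Bool) : QState n →ₗ[ℂ] QState n :=
  Zpow a t ∘ₗ proj r a ∘ₗ Hgate r

/-- The Removal:Add operation `RemAdd_{r→t₁,t₂}` with measurement outcome `a`: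
apply `H` to `r`, project `r` onto `|a⟩`, apply `σ_Z^a` to both `t₁` and `t₂`. -/
def RemAdd {n : ℕ} (r t₁ t₂ : Fin n) (a : Bool) : QState n →ₗ[ℂ] QState n :=
  Zpow a t₂ ∘ₗ Zpow a t₁ ∘ₗ proj r a ∘ₗ Hgate r


/-- Lift a gate on the qubit registers to `V₁ ⊗ (V₂ ⊗ (qubits ⊗ W))`. -/
def liftVVW (V₁ V₂ W : Type*) [AddCommGroup V₁] [Module ℂ V₁] [AddCommGroup V₂] [Module ℂ V₂]
    [AddCommGroup W] [Module ℂ W] {k : ℕ} (g : QState k →ₗ[ℂ] QState k) :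
    V₁ ⊗[ℂ] (V₂ ⊗[ℂ] (QState k ⊗[ℂ] W)) →ₗ[ℂ] V₁ ⊗[ℂ] (V₂ ⊗[ℂ] (QState k ⊗[ℂ] W)) :=
  LinearMap.lTensor V₁ (LinearMap.lTensor V₂ (LinearMap.rTensor W g))


lemma eta4 (x : Fin 4 → Bool) : x = ![x 0, x 1, x 2, x 3] := by
  funext i; fin_cases i <;> rfl

lemma upd2 (a b c d v : Bool) : Function.update ![a,b,c,d] (2:Fin 4) v = ![a,b,v,d] := by
  funext i; fin_cases i <;> simp [Function.update]

lemma upd3 (a b c d v : Bool) : Function.update ![a,b,c,d] (3:Fin 4) v = ![a,b,c,v] := by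
  funext i; fin_cases i <;> simp [Function.update]

lemma addOp_pair (a A B : Bool) :
    AddOp (0 : Fin 4) 1 2 3 a (ket ![A, B, false, false] + ket ![A, B, true, true])
      = ket ![A, B, a, xor A B] := by
  funext x
  rw [eta4 x]
  simp only [AddOp, Con, Xpow, LinearMap.comp_apply]
  cases a <;>
    simp only [if_true, if_false, Bool.false_eq_true, Xgate, proj, CNOTgate, LinearMap.coe_mk,
      AddHom.coe_mk, LinearMap.id_coe, id_eq, Pi.add_apply, Matrix.cons_val_zero,
      Matrix.cons_val_one, Matrix.head_cons, Matrix.cons_val_two, Matrix.tail_cons,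
      Matrix.cons_val_three, Matrix.head_fin_const] <;>
  rcases x 0 <;> rcases x 1 <;> rcases x 2 <;> rcases x 3 <;> rcases A <;> rcases B <;>
    simp only [upd2, upd3, Bool.xor_false, Bool.xor_true, Bool.not_false, Bool.not_true,
      Bool.false_xor, Bool.true_xor, Matrix.cons_val_zero, Matrix.cons_val_one, Matrix.head_cons,
      Matrix.cons_val_two, Matrix.tail_cons, Matrix.cons_val_three, ket, Pi.add_apply] <;>
    norm_num [funext_iff, Fin.forall_fin_succ]

/-- **Connection:Add** (Lemma 3). Registers `A, B, C, D` are `0,…,3`. Applying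
`Add^{A,B}_{C→D}` with measurement outcome `a` to
`(α|ψ₀⟩|0⟩_A + β|ψ₁⟩|1⟩_A) ⊗ (γ|φ₀⟩|0⟩_B + δ|φ₁⟩|1⟩_B) ⊗ |Ψ⁺⟩_{CD} ⊗ |Φ⟩` yields
`(1/√2)[(αγ|ψ₀⟩|φ₀⟩|00⟩_{AB} + βδ|ψ₁⟩|φ₁⟩|11⟩_{AB})|0⟩_D
      + (αδ|ψ₀⟩|φ₁⟩|01⟩_{AB} + βγ|ψ₁⟩|φ₀⟩|10⟩_{AB})|1⟩_D] ⊗ |Φ⟩`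
(with the measured register `C` left in `|a⟩`, to be disregarded). -/
theorem add_action
    (V₁ V₂ W : Type*) [NormedAddCommGroup V₁] [InnerProductSpace ℂ V₁] [FiniteDimensional ℂ V₁]
    [NormedAddCommGroup V₂] [InnerProductSpace ℂ V₂] [FiniteDimensional ℂ V₂]
    [NormedAddCommGroup W] [InnerProductSpace ℂ W] [FiniteDimensional ℂ W]
    (ψ₀ ψ₁ : V₁) (φ₀ φ₁ : V₂) (Φ : W) (α β γ δ : ℂ)
    (hnorm₁ : ‖α‖ ^ 2 + ‖β‖ ^ 2 = 1)
    (hnorm₂ : ‖γ‖ ^ 2 + ‖δ‖ ^ 2 = 1) (a : Bool) :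
    liftVVW V₁ V₂ W (AddOp (0 : Fin 4) 1 2 3 a)
      ((Real.sqrt 2 : ℂ)⁻¹ •
        ((α * γ) • (ψ₀ ⊗ₜ[ℂ] (φ₀ ⊗ₜ[ℂ] ((ket ![false, false, false, false]
              + ket ![false, false, true, true]) ⊗ₜ[ℂ] Φ)))
          + (α * δ) • (ψ₀ ⊗ₜ[ℂ] (φ₁ ⊗ₜ[ℂ] ((ket ![false, true, false, false]
              + ket ![false, true, true, true]) ⊗ₜ[ℂ] Φ)))
          + (β * γ) • (ψ₁ ⊗ₜ[ℂ] (φ₀ ⊗ₜ[ℂ] ((ket ![true, false, false, false]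
              + ket ![true, false, true, true]) ⊗ₜ[ℂ] Φ)))
          + (β * δ) • (ψ₁ ⊗ₜ[ℂ] (φ₁ ⊗ₜ[ℂ] ((ket ![true, true, false, false]
              + ket ![true, true, true, true]) ⊗ₜ[ℂ] Φ)))))
    = (Real.sqrt 2 : ℂ)⁻¹ •
        ((α * γ) • (ψ₀ ⊗ₜ[ℂ] (φ₀ ⊗ₜ[ℂ] (ket ![false, false, a, false] ⊗ₜ[ℂ] Φ)))
          + (β * δ) • (ψ₁ ⊗ₜ[ℂ] (φ₁ ⊗ₜ[ℂ] (ket ![true, true, a, false] ⊗ₜ[ℂ] Φ)))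
          + (α * δ) • (ψ₀ ⊗ₜ[ℂ] (φ₁ ⊗ₜ[ℂ] (ket ![false, true, a, true] ⊗ₜ[ℂ] Φ)))
          + (β * γ) • (ψ₁ ⊗ₜ[ℂ] (φ₀ ⊗ₜ[ℂ] (ket ![true, false, a, true] ⊗ₜ[ℂ] Φ)))) := by
  simp only [liftVVW, map_smul, map_add]
  simp only [LinearMap.lTensor_tmul, LinearMap.rTensor_tmul]
  simp only [addOp_pair, Bool.xor_false, Bool.xor_true, Bool.false_xor, Bool.true_xor,
    Bool.xor_self, Bool.not_false, Bool.not_true]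
  module

end

end QNC
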